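/- Let R be a commutative ring, n ≥ 0, and let a_1, a_2, …, a_{n+1} be elements of R. Then in the polynomial ring R[x], x^n = ∑_{k=0}^{n} h_k(a_1, …, a_{n−k+1}) · ∏_{i=1}^{n−k} (x − a_i), where h_k denotes the k-th complete homogeneous symmetric function (the sum of all monomials of total degree k in its arguments, with h_0 = 1). -/

import Mathlib

/-- `h_n(B)`: the complete homogeneous symmetric function of degree `n` in the
elements of the multiset `B`, defined as the coefficient of `t^n` in
`∏_{b ∈ B} (1 + b t + b² t² + ⋯) = ∏_{b ∈ B} 1/(1 - b t)`. -/
noncomputable def hsymmM {R : Type*} [CommRing R] (B : Multiset R) (n : ℕ) : R :=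
  PowerSeries.coeff n ((B.map fun b => PowerSeries.mk fun k => b ^ k).prod)

/-- `e_k(A)`: the elementary symmetric function of degree `k` in the elements of
the multiset `A`. -/
def esymmM {R : Type*} [CommRing R] (A : Multiset R) (k : ℕ) : R :=
  ((A.powersetCard k).map Multiset.prod).sum

/-- The complementary symmetric function `comp_n(A;B) = ∑_{j=0}^n (-1)^j e_j(A) h_{n-j}(B)`. -/
noncomputable def compM {R : Type*} [CommRing R] (A B : Multiset R) (n : ℕ) : R :=
  ∑ j ∈ Finset.range (n + 1), (-1 : R) ^ j * esymmM A j * hsymmM B (n - j)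


lemma hsymmM_zero {R : Type*} [CommRing R] (B : Multiset R) : hsymmM B 0 = 1 := by
  induction B using Multiset.induction with
  | empty => simp [hsymmM]
  | cons b B ih =>
    simp only [hsymmM, Multiset.map_cons, Multiset.prod_cons] at *
    simp only [PowerSeries.coeff_zero_eq_constantCoeff, map_mul] at *
    simp [ih, PowerSeries.constantCoeff_mk]

lemma hsymmM_nil {R : Type*} [CommRing R] (k : ℕ) : hsymmM (0 : Multiset R) (k+1) = 0 := by
  simp [hsymmM]

lemma hsymmM_cons {R : Type*} [CommRing R] (b : R) (B : Multiset R) (k : ℕ) :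
    hsymmM (b ::ₘ B) (k+1) = hsymmM B (k+1) + b * hsymmM (b ::ₘ B) k := by
  have hS : (PowerSeries.mk fun k => b ^ k : PowerSeries R)
      = 1 + (PowerSeries.C b * PowerSeries.X) * PowerSeries.mk fun k => b ^ k := by
    ext m
    cases m with
    | zero => simp
    | succ m =>
      rw [map_add, mul_assoc, PowerSeries.coeff_C_mul, PowerSeries.coeff_succ_X_mul]
      simp [pow_succ, mul_comm]
  simp only [hsymmM, Multiset.map_cons, Multiset.prod_cons]
  conv_lhs => rw [hS]
  rw [add_mul, one_mul, map_add, mul_assoc, mul_assoc, PowerSeries.coeff_C_mul,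
    PowerSeries.coeff_succ_X_mul]

noncomputable def Hh {R : Type*} [CommRing R] (a : ℕ → R) (m k : ℕ) : R :=
  hsymmM ((Multiset.range m).map fun i => a (i + 1)) k

noncomputable def Pp {R : Type*} [CommRing R] (a : ℕ → R) (m : ℕ) : Polynomial R :=
  ∏ i ∈ Finset.range m, (Polynomial.X - Polynomial.C (a (i + 1)))

lemma Hh_rec {R : Type*} [CommRing R] (a : ℕ → R) (m k : ℕ) :
    Hh a (m+1) (k+1) = Hh a m (k+1) + a (m+1) * Hh a (m+1) k := by
  simp only [Hh, Multiset.range_succ, Multiset.map_cons]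
  exact hsymmM_cons _ _ _

theorem key {R : Type*} [CommRing R] (a : ℕ → R) (n : ℕ) :
    (Polynomial.X ^ n : Polynomial R) =
      ∑ k ∈ Finset.range (n + 1), Polynomial.C (Hh a (n - k + 1) k) * Pp a (n - k) := by
  induction n with
  | zero => simp [Hh, Pp, hsymmM_zero]
  | succ n ih =>
    have hXP : ∀ m, (Polynomial.X : Polynomial R) * Pp a m
        = Pp a (m+1) + Polynomial.C (a (m+1)) * Pp a m := by
      intro m; rw [Pp, Pp, Finset.prod_range_succ]; ring
    have step : (Polynomial.X ^ (n+1) : Polynomial R)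
        = (∑ k ∈ Finset.range (n+1), Polynomial.C (Hh a (n-k+1) k) * Pp a (n-k+1))
          + ∑ k ∈ Finset.range (n+1),
              Polynomial.C (Hh a (n-k+1) k) * (Polynomial.C (a (n-k+1)) * Pp a (n-k)) := by
      rw [pow_succ, ih, Finset.sum_mul, ← Finset.sum_add_distrib]
      refine Finset.sum_congr rfl fun k hk => ?_
      rw [mul_assoc, mul_comm (Pp a (n-k)) Polynomial.X, hXP]; ring
    have hS1 : (∑ k ∈ Finset.range (n+1), Polynomial.C (Hh a (n-k+1) k) * Pp a (n-k+1))
        = (∑ j ∈ Finset.range n, Polynomial.C (Hh a (n-j) (j+1)) * Pp a (n-j)) + Pp a (n+1) := by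
      rw [Finset.sum_range_succ']
      congr 1
      · refine Finset.sum_congr rfl fun j hj => ?_
        simp only [Finset.mem_range] at hj
        have h1 : n - (j+1) + 1 = n - j := by omega
        rw [h1]
      · simp [Hh, hsymmM_zero]
    have htarget : (∑ k ∈ Finset.range (n+1+1),
          Polynomial.C (Hh a (n+1-k+1) k) * Pp a (n+1-k))
        = (∑ j ∈ Finset.range (n+1), Polynomial.C (Hh a (n-j+1) (j+1)) * Pp a (n-j))
          + Pp a (n+1) := by
      rw [Finset.sum_range_succ']
      congr 1
      · refine Finset.sum_congr rfl fun j hj => ?_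
        simp only [Finset.mem_range] at hj
        have h1 : n + 1 - (j+1) + 1 = n - j + 1 := by omega
        have h2 : n + 1 - (j+1) = n - j := by omega
        rw [h1, h2]
      · simp [Hh, hsymmM_zero]
    have hexp : (∑ j ∈ Finset.range (n+1), Polynomial.C (Hh a (n-j+1) (j+1)) * Pp a (n-j))
        = (∑ j ∈ Finset.range (n+1), Polynomial.C (Hh a (n-j) (j+1)) * Pp a (n-j))
          + ∑ j ∈ Finset.range (n+1),
              Polynomial.C (Hh a (n-j+1) j) * (Polynomial.C (a (n-j+1)) * Pp a (n-j)) := by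
      rw [← Finset.sum_add_distrib]
      refine Finset.sum_congr rfl fun j hj => ?_
      rw [show n - j + 1 = (n - j) + 1 from rfl, Hh_rec a (n-j) j, map_add, map_mul]
      ring
    have hlast : (∑ j ∈ Finset.range (n+1), Polynomial.C (Hh a (n-j) (j+1)) * Pp a (n-j))
        = ∑ j ∈ Finset.range n, Polynomial.C (Hh a (n-j) (j+1)) * Pp a (n-j) := by
      rw [Finset.sum_range_succ]
      simp [Hh, Nat.sub_self, hsymmM_nil]
    rw [step, hS1, htarget, hexp, hlast]
    ring


/-- `x^n = ∑_{k=0}^n h_k(a₁,…,a_{n-k+1}) ∏_{i=1}^{n-k} (x - a_i)`. -/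
theorem stmt7 {R : Type*} [CommRing R] (n : ℕ) (a : ℕ → R) :
    (Polynomial.X ^ n : Polynomial R) =
      ∑ k ∈ Finset.range (n + 1),
        Polynomial.C (hsymmM ((Multiset.range (n - k + 1)).map fun i => a (i + 1)) k) *
          ∏ i ∈ Finset.range (n - k), (Polynomial.X - Polynomial.C (a (i + 1))) := by
  simpa [Hh, Pp] using key a n
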